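/- Let n, k be positive integers and consider on ℂ^n the function h_k(x) = Σ_{α ∈ ℕ^n, α_1+⋯+α_n = k} |x_1|^{2α_1}⋯|x_n|^{2α_n} (the sum of the squared moduli of all monomials of degree k). Then for a real number s ≥ 0, the function x ↦ h_k(x)^{−s} is integrable on some neighborhood of 0 in ℂ^n (with respect to Lebesgue measure on ℂ^n ≅ ℝ^{2n}) if and only if s < n/k; consequently, sup { s ≥ 0 : x ↦ h_k(x)^{−s} is integrable near 0 } = n/k, i.e. the log canonical threshold of the k-th power of the maximal ideal of convergent power series equals n/k. -/

import Mathlib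

open MeasureTheory Finset

/-- `h k x = ∑_{|α| = k} |x^α|²`, the sum of squared moduli of all monomials of degree `k`. -/
noncomputable def monomialSumSq (n k : ℕ) (x : Fin n → ℂ) : ℝ :=
  ∑ α ∈ Finset.Nat.antidiagonalTuple n k, ∏ i, ‖x i‖ ^ (2 * α i)

section Aux
open Set Metric

variable {E : Type*} [NormedAddCommGroup E] [NormedSpace ℝ E] [MeasurableSpace E]
  [BorelSpace E] [FiniteDimensional ℝ E] [Nontrivial E]
  (μ : Measure E) [μ.IsAddHaarMeasure]

lemma lintegral_fun_norm_addHaar' (f : ℝ → ENNReal) (hf : Measurable f) :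
    ∫⁻ x, f ‖x‖ ∂μ = μ.toSphere univ *
      ∫⁻ y in Ioi (0 : ℝ), ENNReal.ofReal (y ^ (Module.finrank ℝ E - 1)) * f y := by
  have h1 : ∫⁻ x, f ‖x‖ ∂μ = ∫⁻ x : ({(0)}ᶜ : Set E), f ‖x.1‖ ∂(μ.comap (↑)) := by
    rw [lintegral_subtype_comap (measurableSet_singleton (0:E)).compl fun x => f ‖x‖,
      MeasureTheory.restrict_compl_singleton]
  have hfc : Measurable fun (p : sphere (0:E) 1 × Ioi (0:ℝ)) => f p.2 :=
    (hf.comp measurable_subtype_coe).comp measurable_snd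
  have h2 := (μ.measurePreserving_homeomorphUnitSphereProd).lintegral_comp
      (f := fun (p : sphere (0:E) 1 × Ioi (0:ℝ)) => f p.2) hfc
  rw [h1]
  refine Eq.trans (Eq.trans (lintegral_congr fun x => ?_) h2) ?_
  · simp
  rw [lintegral_prod _ hfc.aemeasurable]
  simp only [lintegral_const]
  rw [mul_comm]
  congr 1
  rw [Measure.volumeIoiPow,
    lintegral_withDensity_eq_lintegral_mul (Measure.comap Subtype.val volume)
      (f := fun r : Ioi (0:ℝ) => ENNReal.ofReal (r.1 ^ (Module.finrank ℝ E - 1)))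
      (by fun_prop) (g := fun y : Ioi (0:ℝ) => f y.1) (hf.comp measurable_subtype_coe)]
  simp only [Pi.mul_apply]
  exact lintegral_subtype_comap measurableSet_Ioi
    (fun y => ENNReal.ofReal (y ^ (Module.finrank ℝ E - 1)) * f y)

lemma lintegral_Ioo_rpow_lt_top_iff {R b : ℝ} (hR : 0 < R) :
    (∫⁻ y in Ioo (0:ℝ) R, ENNReal.ofReal (y ^ b)) < ⊤ ↔ -1 < b := by
  constructor
  · intro h
    by_contra hb
    push_neg at hb
    set R' := min R 1 with hR'
    have hR'0 : 0 < R' := lt_min hR one_pos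
    have hsub : Ioo (0:ℝ) R' ⊆ Ioo 0 R := Ioo_subset_Ioo le_rfl (min_le_left _ _)
    have h' : (∫⁻ y in Ioo (0:ℝ) R', ENNReal.ofReal (y ^ b)) < ⊤ :=
      lt_of_le_of_lt (lintegral_mono' (Measure.restrict_mono hsub le_rfl) le_rfl) h
    have hint : IntegrableOn (fun y => y ^ b) (Ioo (0:ℝ) R') volume := by
      refine ⟨(by fun_prop : Measurable fun y : ℝ => y ^ b).aestronglyMeasurable, ?_⟩
      refine lt_of_le_of_lt (le_of_eq ?_) h'
      refine setLIntegral_congr_fun measurableSet_Ioo (fun y hy => ?_)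
      rw [Real.enorm_eq_ofReal (Real.rpow_nonneg hy.1.le _)]
    have hinv : IntegrableOn (fun y => y⁻¹) (Ioo (0:ℝ) R') volume := by
      refine hint.mono' measurable_inv.aestronglyMeasurable ?_
      refine (ae_restrict_iff' measurableSet_Ioo).2 (ae_of_all _ fun y hy => ?_)
      rw [Real.norm_eq_abs, abs_of_nonneg (inv_nonneg.2 hy.1.le), ← Real.rpow_neg_one y]
      exact Real.rpow_le_rpow_of_exponent_ge hy.1 (hy.2.le.trans (min_le_right _ _)) hb
    have : IntervalIntegrable (fun y => y⁻¹) volume 0 R' := by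
      rw [intervalIntegrable_iff_integrableOn_Ioc_of_le hR'0.le]
      exact hinv.congr_set_ae Ioo_ae_eq_Ioc.symm
    rcases intervalIntegrable_inv_iff.1 this with h0 | h0
    · exact hR'0.ne h0
    · exact h0 (left_mem_uIcc)
  · intro hb
    have h1 : IntervalIntegrable (fun y => y ^ b) volume 0 R :=
      intervalIntegral.intervalIntegrable_rpow' hb
    rw [intervalIntegrable_iff_integrableOn_Ioc_of_le hR.le] at h1
    have h2 : IntegrableOn (fun y => y ^ b) (Ioo (0:ℝ) R) volume :=
      h1.mono_set Ioo_subset_Ioc_self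
    exact lt_of_le_of_lt (lintegral_mono fun y => Real.ofReal_le_enorm _) h2.2

lemma lintegral_ball_norm_rpow_lt_top_iff {R r : ℝ} (hR : 0 < R) :
    (∫⁻ x in ball (0:E) R, ENNReal.ofReal (‖x‖ ^ r) ∂μ) < ⊤ ↔
      -(Module.finrank ℝ E : ℝ) < r := by
  set d := Module.finrank ℝ E with hd
  have hd1 : 1 ≤ d := Module.finrank_pos
  set f : ℝ → ENNReal := (Iio R).indicator (fun y => ENNReal.ofReal (y ^ r)) with hf
  have hfm : Measurable f :=
    Measurable.indicator (by fun_prop) measurableSet_Iio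
  have h0 : ∫⁻ x in ball (0:E) R, ENNReal.ofReal (‖x‖ ^ r) ∂μ = ∫⁻ x, f ‖x‖ ∂μ := by
    rw [← lintegral_indicator measurableSet_ball]
    refine lintegral_congr fun x => ?_
    rw [hf]
    by_cases h : ‖x‖ < R <;> simp [Set.indicator_apply, mem_ball_zero_iff, Set.mem_Iio, h]
  rw [h0, lintegral_fun_norm_addHaar' μ f hfm]
  have hI : (∫⁻ y in Ioi (0:ℝ), ENNReal.ofReal (y ^ (d - 1)) * f y) =
      ∫⁻ y in Ioo (0:ℝ) R, ENNReal.ofReal (y ^ ((d:ℝ) - 1 + r)) := by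
    have e1 : ∀ y : ℝ, ENNReal.ofReal (y ^ (d - 1)) * f y =
        (Iio R).indicator (fun y => ENNReal.ofReal (y ^ (d - 1)) * ENNReal.ofReal (y ^ r)) y := by
      intro y
      by_cases hy : y ∈ Iio R
      · rw [hf, Set.indicator_of_mem hy, Set.indicator_of_mem hy]
      · rw [hf, Set.indicator_of_notMem hy, Set.indicator_of_notMem hy, mul_zero]
    rw [lintegral_congr e1, lintegral_indicator measurableSet_Iio,
      Measure.restrict_restrict measurableSet_Iio, Set.inter_comm, Set.Ioi_inter_Iio]
    refine setLIntegral_congr_fun measurableSet_Ioo (fun y hy => ?_)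
    rw [← ENNReal.ofReal_mul (pow_nonneg hy.1.le _), ← Real.rpow_natCast y (d-1),
      ← Real.rpow_add hy.1, Nat.cast_sub hd1, Nat.cast_one]
  rw [hI]
  have hne : μ.toSphere univ ≠ 0 := by
    rw [Measure.toSphere_apply_univ]
    exact mul_ne_zero (Nat.cast_ne_zero.2 (by omega)) (Metric.measure_ball_pos μ 0 one_pos).ne'
  have hlt : μ.toSphere univ < ⊤ := measure_lt_top _ _
  have hiff : -1 < (d:ℝ) - 1 + r ↔ -(d:ℝ) < r := by constructor <;> intro <;> linarith
  rw [← hiff, ← lintegral_Ioo_rpow_lt_top_iff (b := (d:ℝ) - 1 + r) hR]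
  constructor
  · intro h
    by_contra h'
    rw [lt_top_iff_ne_top, not_not] at h'
    rw [h', ENNReal.mul_top hne] at h
    exact (lt_irrefl _ h).elim
  · intro h
    exact ENNReal.mul_lt_top hlt h

lemma integrableOn_ball_norm_rpow_iff {R r : ℝ} (hR : 0 < R) :
    IntegrableOn (fun x => ‖x‖ ^ r) (ball (0:E) R) μ ↔
      -(Module.finrank ℝ E : ℝ) < r := by
  rw [← lintegral_ball_norm_rpow_lt_top_iff μ (r := r) hR]
  constructor
  · intro h
    exact lt_of_le_of_lt (lintegral_mono fun x => Real.ofReal_le_enorm _) h.2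
  · intro h
    refine ⟨(by fun_prop : Measurable fun x : E => ‖x‖ ^ r).aestronglyMeasurable, ?_⟩
    refine lt_of_le_of_lt (le_of_eq ?_) h
    exact lintegral_congr fun x => Real.enorm_eq_ofReal (Real.rpow_nonneg (norm_nonneg _) _)

end Aux

theorem lct_pow_maximalIdeal (n k : ℕ) (hn : 0 < n) (hk : 0 < k) :
    (∀ s : ℝ, 0 ≤ s →
      ((∃ U ∈ nhds (0 : Fin n → ℂ),
          IntegrableOn (fun x => (monomialSumSq n k x) ^ (-s)) U volume) ↔
        s < (n : ℝ) / (k : ℝ))) ∧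
    sSup {s : ℝ | 0 ≤ s ∧ ∃ U ∈ nhds (0 : Fin n → ℂ),
        IntegrableOn (fun x => (monomialSumSq n k x) ^ (-s)) U volume} =
      (n : ℝ) / (k : ℝ) := by
  haveI : Nonempty (Fin n) := ⟨⟨0, hn⟩⟩
  have hd : Module.finrank ℝ (Fin n → ℂ) = 2 * n := by
    simp [Module.finrank_pi_fintype, Complex.finrank_real_complex, mul_comm]
  set C : ℕ := (Finset.Nat.antidiagonalTuple n k).card with hC
  have hCpos : 0 < C :=
    Finset.card_pos.2 ⟨Pi.single ⟨0, hn⟩ k, Finset.Nat.mem_antidiagonalTuple.2 (by simp)⟩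
  have hmeas : Measurable (monomialSumSq n k) := by
    apply Finset.measurable_sum
    intro α _
    apply Finset.measurable_prod
    intro i _
    exact (((measurable_pi_apply i : Measurable fun x : Fin n → ℂ => x i)).norm).pow_const _
  have hlow : ∀ x : Fin n → ℂ, ‖x‖ ^ (2 * k) ≤ monomialSumSq n k x := by
    intro x
    obtain ⟨j, -, hj⟩ := Finset.exists_mem_eq_sup Finset.univ Finset.univ_nonempty
      (fun i => ‖x i‖₊)
    have hxj : ‖x‖ = ‖x j‖ := by rw [Pi.norm_def, hj]; rfl
    have hmem : Pi.single j k ∈ Finset.Nat.antidiagonalTuple n k :=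
      Finset.Nat.mem_antidiagonalTuple.2 (by simp)
    have hterm : (∏ i, ‖x i‖ ^ (2 * Pi.single j k i)) = ‖x j‖ ^ (2 * k) := by
      rw [Finset.prod_eq_single j (fun b _ hb => by simp [Pi.single_eq_of_ne hb])
        (fun h => absurd (Finset.mem_univ j) h)]
      simp
    calc ‖x‖ ^ (2 * k) = ∏ i, ‖x i‖ ^ (2 * Pi.single j k i) := by rw [hxj, hterm]
      _ ≤ monomialSumSq n k x := by
        unfold monomialSumSq
        exact Finset.single_le_sum
          (f := fun α : Fin n → ℕ => ∏ i, ‖x i‖ ^ (2 * α i))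
          (fun α _ => Finset.prod_nonneg fun i _ =>
            pow_nonneg (norm_nonneg _) _) hmem
  have hup : ∀ x : Fin n → ℂ, monomialSumSq n k x ≤ (C : ℝ) * ‖x‖ ^ (2 * k) := by
    intro x
    have hterm : ∀ α ∈ Finset.Nat.antidiagonalTuple n k,
        (∏ i, ‖x i‖ ^ (2 * α i)) ≤ ‖x‖ ^ (2 * k) := by
      intro α hα
      have h1 : (∏ i, ‖x i‖ ^ (2 * α i)) ≤ ∏ i, ‖x‖ ^ (2 * α i) := by
        refine Finset.prod_le_prod (fun i _ => pow_nonneg (norm_nonneg _) _)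
          (fun i _ => pow_le_pow_left₀ (norm_nonneg _) ?_ _)
        exact norm_le_pi_norm x i
      refine h1.trans (le_of_eq ?_)
      rw [Finset.prod_pow_eq_pow_sum, ← Finset.mul_sum,
        Finset.Nat.mem_antidiagonalTuple.1 hα]
    calc monomialSumSq n k x ≤ C • (‖x‖ ^ (2 * k)) := Finset.sum_le_card_nsmul _ _ _ hterm
      _ = (C : ℝ) * ‖x‖ ^ (2 * k) := nsmul_eq_mul _ _
  have hpos : ∀ x : Fin n → ℂ, x ≠ 0 → 0 < monomialSumSq n k x := fun x hx =>
    lt_of_lt_of_le (pow_pos (norm_pos_iff.2 hx) _) (hlow x)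
  have hbound : ∀ s : ℝ, 0 ≤ s → ∀ x : Fin n → ℂ, x ≠ 0 →
      monomialSumSq n k x ^ (-s) ≤ ‖x‖ ^ (((2 * k : ℕ) : ℝ) * (-s)) ∧
      ‖x‖ ^ (((2 * k : ℕ) : ℝ) * (-s)) ≤ (C : ℝ) ^ s * monomialSumSq n k x ^ (-s) := by
    intro s hs x hx
    have hxn : 0 < ‖x‖ := norm_pos_iff.2 hx
    have hp : (0 : ℝ) < ‖x‖ ^ (2 * k) := pow_pos hxn _
    have hh := hpos x hx
    have e1 : ‖x‖ ^ (((2 * k : ℕ) : ℝ) * (-s)) = (‖x‖ ^ (2 * k)) ^ (-s) := by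
      rw [← Real.rpow_natCast ‖x‖ (2 * k), ← Real.rpow_mul (norm_nonneg x)]
    constructor
    · rw [e1, Real.rpow_neg hh.le, Real.rpow_neg hp.le]
      exact inv_anti₀ (Real.rpow_pos_of_pos hp _)
        (Real.rpow_le_rpow hp.le (hlow x) hs)
    · rw [e1, Real.rpow_neg hp.le, Real.rpow_neg hh.le, ← div_eq_mul_inv,
        le_div_iff₀ (Real.rpow_pos_of_pos hh _), inv_mul_le_iff₀ (Real.rpow_pos_of_pos hp _)]
      calc monomialSumSq n k x ^ s ≤ ((C : ℝ) * ‖x‖ ^ (2 * k)) ^ s :=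
            Real.rpow_le_rpow hh.le (hup x) hs
        _ = (C : ℝ) ^ s * (‖x‖ ^ (2 * k)) ^ s :=
            Real.mul_rpow (Nat.cast_nonneg C) hp.le
        _ = (‖x‖ ^ (2 * k)) ^ s * (C : ℝ) ^ s := mul_comm _ _
  have h0ae : ∀ᵐ x : Fin n → ℂ ∂volume, x ≠ 0 := by
    rw [ae_iff]
    simpa using measure_singleton (0 : Fin n → ℂ)
  have hkR : (0 : ℝ) < (k : ℝ) := by exact_mod_cast hk
  have main : ∀ s : ℝ, 0 ≤ s →
      ((∃ U ∈ nhds (0 : Fin n → ℂ),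
          IntegrableOn (fun x => (monomialSumSq n k x) ^ (-s)) U volume) ↔
        s < (n : ℝ) / (k : ℝ)) := by
    intro s hs
    have hreq : (-(Module.finrank ℝ (Fin n → ℂ) : ℝ) < ((2 * k : ℕ) : ℝ) * (-s)) ↔
        s < (n : ℝ) / (k : ℝ) := by
      rw [hd, lt_div_iff₀ hkR]
      push_cast
      constructor <;> intro h <;> nlinarith
    constructor
    · rintro ⟨U, hU, hInt⟩
      obtain ⟨ε, hε, hball⟩ := Metric.mem_nhds_iff.1 hU
      have hI : IntegrableOn (fun x => ‖x‖ ^ (((2 * k : ℕ) : ℝ) * (-s)))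
          (Metric.ball (0 : Fin n → ℂ) ε) volume := by
        have hg : IntegrableOn (fun x => (C : ℝ) ^ s * monomialSumSq n k x ^ (-s))
            (Metric.ball (0 : Fin n → ℂ) ε) volume := (hInt.mono_set hball).const_mul _
        refine hg.mono'
          ((by fun_prop : Measurable fun x : Fin n → ℂ =>
            ‖x‖ ^ (((2 * k : ℕ) : ℝ) * (-s))).aestronglyMeasurable) ?_
        filter_upwards [ae_restrict_of_ae h0ae] with x hx
        rw [Real.norm_eq_abs, abs_of_nonneg (Real.rpow_nonneg (norm_nonneg x) _)]
        exact (hbound s hs x hx).2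
      rw [← hreq]
      exact (integrableOn_ball_norm_rpow_iff volume hε).1 hI
    · intro hs'
      refine ⟨Metric.ball 0 1, Metric.ball_mem_nhds _ one_pos, ?_⟩
      have hg : IntegrableOn (fun x => ‖x‖ ^ (((2 * k : ℕ) : ℝ) * (-s)))
          (Metric.ball (0 : Fin n → ℂ) 1) volume :=
        (integrableOn_ball_norm_rpow_iff volume one_pos).2 (hreq.2 hs')
      refine hg.mono'
        ((by fun_prop : Measurable fun x : Fin n → ℂ =>
          monomialSumSq n k x ^ (-s)).aestronglyMeasurable) ?_
      filter_upwards [ae_restrict_of_ae h0ae] with x hx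
      rw [Real.norm_eq_abs, abs_of_nonneg (Real.rpow_nonneg (hpos x hx).le _)]
      exact (hbound s hs x hx).1
  refine ⟨main, ?_⟩
  have hset : {s : ℝ | 0 ≤ s ∧ ∃ U ∈ nhds (0 : Fin n → ℂ),
      IntegrableOn (fun x => (monomialSumSq n k x) ^ (-s)) U volume} =
      Set.Ico 0 ((n : ℝ) / (k : ℝ)) := by
    ext s
    simp only [Set.mem_setOf_eq, Set.mem_Ico]
    constructor
    · rintro ⟨h1, h2⟩
      exact ⟨h1, (main s h1).1 h2⟩
    · rintro ⟨h1, h2⟩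
      exact ⟨h1, (main s h1).2 h2⟩
  rw [hset, csSup_Ico (div_pos (by exact_mod_cast hn) hkR)]
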